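/- Let η ∈ ℕ^6 satisfy SNec(η). Then for every (r,s) ∈ Δ₃, the derivative at the point s of the function t ↦ η·α(r,t) is strictly negative. -/

import Mathlib

open scoped BigOperators

noncomputable section

/-- The Euclidean plane. -/
abbrev Plane := EuclideanSpace ℝ (Fin 2)

/-- A circle in the plane: a center together with a positive radius. -/
structure Circle2 where
  center : Plane
  radius : ℝ
  radius_pos : 0 < radius

/-- Two circles are tangent if the distance between their centers is the sum of radii. -/
def Tangent (S T : Circle2) : Prop :=
  dist S.center T.center = S.radius + T.radius

/-- A packing: the open discs bounded by distinct circles are pairwise disjoint. -/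
def IsPacking (P : Set Circle2) : Prop :=
  ∀ S ∈ P, ∀ T ∈ P, S ≠ T →
    Disjoint (Metric.ball S.center S.radius) (Metric.ball T.center T.radius)

/-- A neighbor cycle of `S` in `P`: a family `A : ZMod n → Circle2` with `n ≥ 1`, consisting
of circles of `P`, each tangent to `S`, consecutive ones tangent, and exhausting all
neighbors of `S` in `P`. -/
def IsNeighborCycle (P : Set Circle2) (S : Circle2) {n : ℕ} (A : ZMod n → Circle2) : Prop :=
  1 ≤ n ∧ (∀ i, A i ∈ P) ∧ (∀ i, Tangent S (A i)) ∧
  (∀ i, Tangent (A i) (A (i + 1))) ∧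
  (∀ T ∈ P, Tangent S T → ∃ i, T = A i)

/-- A compact packing: a packing in which every circle has a neighbor cycle. -/
def IsCompactPacking (P : Set Circle2) : Prop :=
  IsPacking P ∧ ∀ S ∈ P, ∃ (n : ℕ) (A : ZMod n → Circle2), IsNeighborCycle P S A

/-- The set of radii of the circles of a packing. -/
def radii (P : Set Circle2) : Set ℝ := Circle2.radius '' P

/-- The six target unordered pairs (as multisets) of radii:
{1,1}, {r₀,r₀}, {s₀,s₀}, {1,r₀}, {1,s₀}, {r₀,s₀}. -/
def pairTargets (r₀ s₀ : ℝ) : Fin 6 → Multiset ℝ :=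
  ![{1, 1}, {r₀, r₀}, {s₀, s₀}, {1, r₀}, {1, s₀}, {r₀, s₀}]

/-- The angle-count of a neighbor cycle `A`: coordinate `k` counts the indices `i` for which
the unordered pair of radii of `A i` and `A (i+1)` is the `k`-th target pair. -/
def angleCount (r₀ s₀ : ℝ) {n : ℕ} (A : ZMod n → Circle2) : Fin 6 → ℕ :=
  fun k => Set.ncard {i : ZMod n |
    ({(A i).radius, (A (i + 1)).radius} : Multiset ℝ) = pairTargets r₀ s₀ k}

/-- Dot product of two tuples in ℕ^6. -/
def dotNN (ξ v : Fin 6 → ℕ) : ℕ := ∑ i, ξ i * v i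

/-- Dot product of a tuple in ℕ^6 with a vector in ℝ^6. -/
def dotNR (ξ : Fin 6 → ℕ) (v : Fin 6 → ℝ) : ℝ := ∑ i, (ξ i : ℝ) * v i

/-- The angle at the center of a circle of radius `a` formed by the centers of mutually
tangent circles of radii `b` and `c`. -/
def ang (a b c : ℝ) : ℝ :=
  Real.arccos (((a + b) ^ 2 + (a + c) ^ 2 - (b + c) ^ 2) / (2 * (a + c) * (a + b)))

/-- The vector α(r,s) ∈ ℝ^6. -/
def alphaVec (r s : ℝ) : Fin 6 → ℝ :=
  ![ang s 1 1, ang s r r, ang s s s, ang s 1 r, ang s 1 s, ang s r s]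

/-- The vector β(r,s) ∈ ℝ^6. -/
def betaVec (r s : ℝ) : Fin 6 → ℝ :=
  ![ang r 1 1, ang r r r, ang r s s, ang r 1 r, ang r 1 s, ang r r s]

/-- The vector γ(r,s) ∈ ℝ^6. -/
def gammaVec (r s : ℝ) : Fin 6 → ℝ :=
  ![ang 1 1 1, ang 1 r r, ang 1 s s, ang 1 1 r, ang 1 1 s, ang 1 r s]

/-- Δ₃ = {(r,s) : 0 < s < r < 1}. -/
def Delta3 : Set (ℝ × ℝ) := {p | 0 < p.2 ∧ p.2 < p.1 ∧ p.1 < 1}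

/-- Π₃ = pairs (r,s) with 0 < s < r < 1 admitting a compact packing with radii {s, r, 1}. -/
def Pi3 : Set (ℝ × ℝ) :=
  {p | 0 < p.2 ∧ p.2 < p.1 ∧ p.1 < 1 ∧
    ∃ P : Set Circle2, IsCompactPacking P ∧ radii P = {p.2, p.1, 1}}

/-- Standard basis vector of ℕ^6. -/
def eb (i : Fin 6) : Fin 6 → ℕ := fun j => if j = i then 1 else 0

/-- The symmetric map κ : Fin 3 → Fin 3 → ℕ^6 sending (0,0),(1,1),(2,2),(0,1),(0,2),(1,2)
to e₁,e₂,e₃,e₄,e₅,e₆ respectively. -/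
def kappa : Fin 3 → Fin 3 → (Fin 6 → ℕ) :=
  ![![eb 0, eb 3, eb 4], ![eb 3, eb 1, eb 5], ![eb 4, eb 5, eb 2]]

/-- Seq(η): η arises as the sum ∑_{j ∈ ZMod n} κ(σ(j), σ(j+1)) for some n ≥ 1 and σ. -/
def SeqCond (η : Fin 6 → ℕ) : Prop :=
  ∃ (n : ℕ) (σ : ZMod n → Fin 3), 1 ≤ n ∧
    η = ∑ᶠ j : ZMod n, kappa (σ j) (σ (j + 1))

/-- Mod2(η): three parity conditions. -/
def Mod2 (η : Fin 6 → ℕ) : Prop :=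
  Even (dotNN η ![2,0,0,1,1,0]) ∧ Even (dotNN η ![0,2,0,1,0,1]) ∧
    Even (dotNN η ![0,0,2,0,1,1])

/-- SNec(η). -/
def SNec (η : Fin 6 → ℕ) : Prop :=
  dotNN η ![1,1,1,1,1,1] < 6 ∧ 12 < dotNN η ![6,6,2,6,3,3] ∧
    dotNN η ![1,1,0,1,1,1] ≠ 0 ∧ SeqCond η ∧ Mod2 η

/-- RNec(ζ). -/
def RNec (ζ : Fin 6 → ℕ) : Prop :=
  dotNN ζ ![1,1,0,1,0,0] < 6 ∧ 12 < dotNN ζ ![6,2,2,3,3,2] ∧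
    dotNN ζ ![2,2,0,2,1,1] ≤ 12 ∧ dotNN ζ ![1,0,1,1,1,1] ≠ 0 ∧
    SeqCond ζ ∧ Mod2 ζ ∧
    (0 < dotNN ζ ![2,0,0,1,1,0] → dotNN ζ ![2,2,0,2,1,1] < 12)

/-- The set K ⊆ ℕ^6 × ℕ^6. -/
def Kset : Set ((Fin 6 → ℕ) × (Fin 6 → ℕ)) :=
  {p | SNec p.1 ∧ RNec p.2 ∧ p.2 2 < 35 ∧
    (dotNN p.1 ![1,0,0,1,1,0] ≠ 0 ∨ dotNN p.2 ![1,0,0,1,1,0] ≠ 0)}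

open Filter in

private lemma stmt13_key {f g : ℝ → ℝ} {s d : ℝ}
    (hfg : f =ᶠ[nhds s] fun t => Real.arccos (g t))
    (hg : HasDerivAt g d s) (hd : 0 < d) (h1 : -1 < g s) (h2 : g s < 1) :
    ∃ d' < 0, HasDerivAt f d' s := by
  refine ⟨-(1 / Real.sqrt (1 - g s ^ 2)) * d, ?_, ?_⟩
  · have hsq : 0 < 1 - g s ^ 2 := by nlinarith
    have h3 : 0 < Real.sqrt (1 - g s ^ 2) := Real.sqrt_pos.2 hsq
    have h4 : 0 < 1 / Real.sqrt (1 - g s ^ 2) := by positivity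
    nlinarith
  · exact (((Real.hasDerivAt_arccos (by linarith) (ne_of_lt h2)).comp s hg)).congr_of_eventuallyEq hfg

private lemma stmt13_angA (b c : ℝ) (hb : 0 < b) (hc : 0 < c) (s : ℝ) (hs : 0 < s) :
    ∃ d < 0, HasDerivAt (fun t => ang t b c) d s := by
  set g : ℝ → ℝ := fun t => 1 - 2 * b * c / ((t + b) * (t + c)) with hgdef
  have hfg : (fun t => ang t b c) =ᶠ[nhds s] fun t => Real.arccos (g t) := by
    filter_upwards [Ioi_mem_nhds hs] with t ht
    have h1 : (0:ℝ) < t := ht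
    have h2 : t + b ≠ 0 := by positivity
    have h3 : t + c ≠ 0 := by positivity
    unfold ang
    congr 1
    simp only [hgdef]
    field_simp
    ring
  have hden : (s + b) * (s + c) ≠ 0 := by positivity
  have hder : HasDerivAt g (2 * b * c * ((s + c) + (s + b)) / ((s + b) * (s + c)) ^ 2) s := by
    have h1 : HasDerivAt (fun t : ℝ => (t + b) * (t + c)) (1 * (s + c) + (s + b) * 1) s :=
      ((hasDerivAt_id s).add_const b).mul ((hasDerivAt_id s).add_const c)
    have h2 := (h1.inv hden).const_mul (2 * b * c)
    have h3 := h2.const_sub 1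
    refine h3.congr_deriv ?_
    ring
  have hD : b * c < (s + b) * (s + c) := by nlinarith
  have hbc : 0 < b * c := by positivity
  refine stmt13_key hfg hder (by positivity) ?_ ?_
  · have : 2 * b * c / ((s + b) * (s + c)) < 2 := by
      rw [div_lt_iff₀ (by positivity)]; nlinarith
    simp only [hgdef]; linarith
  · have : 0 < 2 * b * c / ((s + b) * (s + c)) := by positivity
    simp only [hgdef]; linarith

private lemma stmt13_angB (b : ℝ) (hb : 0 < b) (s : ℝ) (hs : 0 < s) :
    ∃ d < 0, HasDerivAt (fun t => ang t b t) d s := by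
  set g : ℝ → ℝ := fun t => t / (t + b) with hgdef
  have hfg : (fun t => ang t b t) =ᶠ[nhds s] fun t => Real.arccos (g t) := by
    filter_upwards [Ioi_mem_nhds hs] with t ht
    have h1 : (0:ℝ) < t := ht
    have h2 : t + b ≠ 0 := by positivity
    unfold ang
    congr 1
    simp only [hgdef]
    field_simp
    ring
  have hden : s + b ≠ 0 := by positivity
  have hder : HasDerivAt g ((1 * (s + b) - s * 1) / (s + b) ^ 2) s :=
    (hasDerivAt_id s).div ((hasDerivAt_id s).add_const b) hden
  refine stmt13_key hfg hder ?_ ?_ ?_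
  · have : 1 * (s + b) - s * 1 = b := by ring
    rw [this]; positivity
  · have h0 : (0:ℝ) < s / (s + b) := by positivity
    simp only [hgdef]; linarith
  · simp only [hgdef]
    rw [div_lt_one (by positivity)]; linarith

private lemma stmt13_angC (s : ℝ) (hs : 0 < s) :
    HasDerivAt (fun t => ang t t t) 0 s := by
  have hfg : (fun t => ang t t t) =ᶠ[nhds s] fun _ => Real.arccos (1/2) := by
    filter_upwards [Ioi_mem_nhds hs] with t ht
    have h1 : (0:ℝ) < t := ht
    unfold ang
    congr 1
    field_simp
    ring
  exact (hasDerivAt_const s _).congr_of_eventuallyEq hfg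


/-- The partial derivative of η·α(r,·) is strictly negative on Δ₃. -/
theorem stmt_13 (η : Fin 6 → ℕ) (hη : SNec η) (r s : ℝ) (h : (r, s) ∈ Delta3) :
    ∃ d : ℝ, d < 0 ∧ HasDerivAt (fun t => dotNR η (alphaVec r t)) d s := by
  obtain ⟨hs, hsr, hr1⟩ := h
  have hr : 0 < r := hs.trans hsr
  obtain ⟨d0, hd0, h0⟩ := stmt13_angA 1 1 one_pos one_pos s hs
  obtain ⟨d1, hd1, h1⟩ := stmt13_angA r r hr hr s hs
  have h2 : HasDerivAt (fun t => ang t t t) 0 s := stmt13_angC s hs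
  obtain ⟨d3, hd3, h3⟩ := stmt13_angA 1 r one_pos hr s hs
  obtain ⟨d4, hd4, h4⟩ := stmt13_angB 1 one_pos s hs
  obtain ⟨d5, hd5, h5⟩ := stmt13_angB r hr s hs
  refine ⟨(η 0)*d0 + (η 1)*d1 + (η 2)*(0:ℝ) + (η 3)*d3 + (η 4)*d4 + (η 5)*d5, ?_, ?_⟩
  · have hne : η 0 ≠ 0 ∨ η 1 ≠ 0 ∨ η 3 ≠ 0 ∨ η 4 ≠ 0 ∨ η 5 ≠ 0 := by
      have hd := hη.2.2.1
      have : dotNN η ![1,1,0,1,1,1]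
          = η 0 * 1 + (η 1 * 1 + (η 2 * 0 + (η 3 * 1 + (η 4 * 1 + (η 5 * 1 + 0))))) := rfl
      omega
    have t0 : (η 0:ℝ)*d0 ≤ 0 := mul_nonpos_of_nonneg_of_nonpos (Nat.cast_nonneg _) hd0.le
    have t1 : (η 1:ℝ)*d1 ≤ 0 := mul_nonpos_of_nonneg_of_nonpos (Nat.cast_nonneg _) hd1.le
    have t3 : (η 3:ℝ)*d3 ≤ 0 := mul_nonpos_of_nonneg_of_nonpos (Nat.cast_nonneg _) hd3.le
    have t4 : (η 4:ℝ)*d4 ≤ 0 := mul_nonpos_of_nonneg_of_nonpos (Nat.cast_nonneg _) hd4.le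
    have t5 : (η 5:ℝ)*d5 ≤ 0 := mul_nonpos_of_nonneg_of_nonpos (Nat.cast_nonneg _) hd5.le
    have strict : ∀ (c : ℕ) (x : ℝ), c ≠ 0 → x < 0 → (c:ℝ)*x < 0 := fun c x hc hx =>
      mul_neg_of_pos_of_neg (by exact_mod_cast Nat.pos_of_ne_zero hc) hx
    rcases hne with h | h | h | h | h
    · have := strict _ _ h hd0; nlinarith
    · have := strict _ _ h hd1; nlinarith
    · have := strict _ _ h hd3; nlinarith
    · have := strict _ _ h hd4; nlinarith
    · have := strict _ _ h hd5; nlinarith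
  · have hfun : (fun t => dotNR η (alphaVec r t)) = fun t => (η 0:ℝ)*ang t 1 1
        + (η 1:ℝ)*ang t r r + (η 2:ℝ)*ang t t t + (η 3:ℝ)*ang t 1 r
        + (η 4:ℝ)*ang t 1 t + (η 5:ℝ)*ang t r t := by
      funext t
      show (η 0:ℝ)*ang t 1 1 + ((η 1:ℝ)*ang t r r + ((η 2:ℝ)*ang t t t + ((η 3:ℝ)*ang t 1 r
        + ((η 4:ℝ)*ang t 1 t + ((η 5:ℝ)*ang t r t + 0))))) = _
      ring
    rw [hfun]
    exact (((((h0.const_mul _).add (h1.const_mul _)).add (h2.const_mul _)).add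
      (h3.const_mul _)).add (h4.const_mul _)).add (h5.const_mul _)


end
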